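/- Let k be a field and let (a_1,…,a_7), (b_1,…,b_7) ∈ k^7. Set u := Σ_{i=1}^7 b_i o_i and v := Σ_{i=1}^7 a_i o_i in Im O_k. Then the seven quadratic equations Σ_{i,j=1}^7 ε^{ℓij} b_i a_j = 0 (ℓ = 1,…,7) hold if and only if Im(vu) = 0, if and only if Im(uv) = 0. (These seven equations are exactly the relations of the quiver Q whose representations of dimension vector (1,1,1) are parametrized by such pairs; hence the moduli of indecomposable (1,1,1)-representations is the locus {([u],[v]) ∈ ℙ⁶×ℙ⁶ : Im(uv) = 0}.) -/

import Mathlib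

/- The Fano-plane structure constants ε^{ijk}.  Indices `0,…,6` correspond to labels `1,…,7`,
so the directed lines 123, 145, 167, 246, 275, 374, 365 become the triples below. -/
def fanoTriples : List (Fin 7 × Fin 7 × Fin 7) :=
  [(0, 1, 2), (0, 3, 4), (0, 5, 6), (1, 3, 5), (1, 6, 4), (2, 6, 3), (2, 5, 4)]

/-- All cyclic permutations of the directed Fano lines. -/
def fanoPlus : List (Fin 7 × Fin 7 × Fin 7) :=
  fanoTriples.flatMap fun t => [(t.1, t.2.1, t.2.2), (t.2.1, t.2.2, t.1), (t.2.2, t.1, t.2.1)]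

/-- The totally antisymmetric symbol `ε^{ijk}`. -/
def eps (i j k : Fin 7) : ℤ :=
  if (i, j, k) ∈ fanoPlus then 1 else if (j, i, k) ∈ fanoPlus then -1 else 0

/-- The octonion algebra `O_k`: the vector space `k ⊕ k^7` with basis `1, o_1, …, o_7`.
An element is a pair (real part, vector of coefficients of `o_1,…,o_7`). -/
def Oct (k : Type) [Field k] : Type := k × (Fin 7 → k)

namespace Oct

variable {k : Type} [Field k]

instance : AddCommGroup (Oct k) := inferInstanceAs (AddCommGroup (k × (Fin 7 → k)))
instance : Module k (Oct k) := inferInstanceAs (Module k (k × (Fin 7 → k)))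

/-- The coefficient of `1` in an octonion. -/
def re (u : Oct k) : k := Prod.fst u

/-- The coefficients of `o_1, …, o_7` in an octonion. -/
def im (u : Oct k) : Fin 7 → k := Prod.snd u

/-- The unit `1` of `O_k`. -/
instance : One (Oct k) := ⟨((1 : k), 0)⟩

/-- Octonion multiplication, determined by `o_r o_s = Σ_i ε^{rsi} o_i − δ_{rs}·1`
together with `1` being a two-sided unit. -/
instance : Mul (Oct k) :=
  ⟨fun u v =>
    (re u * re v - ∑ i : Fin 7, im u i * im v i,
     fun i => re u * im v i + re v * im u i +
       ∑ r : Fin 7, ∑ s : Fin 7, ((eps r s i : ℤ) : k) * im u r * im v s)⟩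

/-- The imaginary basis octonions `o_1, …, o_7`. -/
def oc (i : Fin 7) : Oct k := ((0 : k), Pi.single i 1)

/-- Conjugation on `O_k`: fixes `1` and negates each `o_i`. -/
def conj (u : Oct k) : Oct k := (re u, -im u)

/-- The purely imaginary part `Im(u) = (u - ū)/2` of an octonion. -/
def imPart (u : Oct k) : Oct k := ((0 : k), im u)

/-- The symmetric bilinear form `⟨u, v⟩ = Re(u·v̄)` on `O_k`. -/
def form (u v : Oct k) : k := re (u * conj v)

/-- The subspace `Im O_k` of purely imaginary octonions (the span of `o_1, …, o_7`). -/
def ImO (k : Type) [Field k] : Submodule k (Oct k) where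
  carrier := {u | re u = 0}
  add_mem' := by
    intro a b ha hb
    simp only [Set.mem_setOf_eq] at *
    show re a + re b = 0
    rw [ha, hb, add_zero]
  zero_mem' := rfl
  smul_mem' := by
    intro c a ha
    simp only [Set.mem_setOf_eq] at *
    show c * re a = 0
    rw [ha, mul_zero]

end Oct

open Oct

/-- STATEMENT 19: for `u = Σ b_i o_i` and `v = Σ a_i o_i` in `Im O_k`, the seven quadratic
relations `Σ_{i,j} ε^{ℓij} b_i a_j = 0` (the relations of the quiver `Q` on representations
of dimension vector `(1,1,1)`) hold if and only if `Im(vu) = 0`, if and only if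
`Im(uv) = 0`. -/

lemma eps_skew : ∀ i j l : Fin 7, eps i j l = - eps l j i := by decide

lemma eps_swap : ∀ i j l : Fin 7, eps i j l = - eps j i l := by decide

lemma oct_re_sum {k : Type} [Field k] (f : Fin 7 → Oct k) :
    re (∑ i : Fin 7, f i) = ∑ i : Fin 7, re (f i) :=
  Prod.fst_sum

lemma oct_im_sum {k : Type} [Field k] (f : Fin 7 → Oct k) (j : Fin 7) :
    im (∑ i : Fin 7, f i) j = ∑ i : Fin 7, im (f i) j := by
  have : im (∑ i : Fin 7, f i) = ∑ i : Fin 7, im (f i) := Prod.snd_sum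
  rw [this, Finset.sum_apply]

lemma oct_re_smul {k : Type} [Field k] (c : k) (w : Oct k) : re (c • w) = c * re w := rfl

lemma oct_im_smul {k : Type} [Field k] (c : k) (w : Oct k) (j : Fin 7) :
    im (c • w) j = c * im w j := rfl

theorem Oct.moduli_one_one_one (k : Type) [Field k] (a b : Fin 7 → k)
    (u v : Oct k)
    (hu : u = ∑ i : Fin 7, b i • oc i) (hv : v = ∑ i : Fin 7, a i • oc i) :
    ((∀ ℓ : Fin 7, ∑ i : Fin 7, ∑ j : Fin 7, ((eps ℓ i j : ℤ) : k) * b i * a j = 0) ↔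
        imPart (v * u) = 0) ∧
      (imPart (v * u) = 0 ↔ imPart (u * v) = 0) := by
  have hre : ∀ (c : Fin 7 → k), re (∑ i : Fin 7, c i • (oc i : Oct k)) = 0 := by
    intro c
    have h0 : ∀ x ∈ Finset.univ, re (c x • (oc x : Oct k)) = c x * 0 := fun x _ => rfl
    rw [oct_re_sum, Finset.sum_congr rfl h0]
    simp
  have him : ∀ (c : Fin 7 → k) (j : Fin 7), im (∑ i : Fin 7, c i • (oc i : Oct k)) j = c j := by
    intro c j
    have h0 : ∀ x ∈ Finset.univ, im (c x • (oc x : Oct k)) j = c x * (Pi.single x (1 : k) : Fin 7 → k) j :=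
      fun x _ => rfl
    rw [oct_im_sum, Finset.sum_congr rfl h0]
    simp [Pi.single_apply]
  have hre_u : re u = 0 := by rw [hu]; exact hre b
  have hre_v : re v = 0 := by rw [hv]; exact hre a
  have him_u : im u = b := by funext j; rw [hu]; exact him b j
  have him_v : im v = a := by funext j; rw [hv]; exact him a j
  set S : Fin 7 → k := fun l => ∑ r : Fin 7, ∑ s : Fin 7, ((eps r s l : ℤ) : k) * a r * b s
    with hS
  have hvu : imPart (v * u) = ((0 : k), fun i => S i) := by
    unfold imPart
    refine Prod.ext rfl ?_
    funext i
    show re v * im u i + re u * im v i +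
      (∑ r : Fin 7, ∑ s : Fin 7, ((eps r s i : ℤ) : k) * im v r * im u s) = S i
    rw [hre_u, hre_v, him_u, him_v, hS]
    ring
  have huv : imPart (u * v) =
      ((0 : k), fun i => ∑ r : Fin 7, ∑ s : Fin 7, ((eps r s i : ℤ) : k) * b r * a s) := by
    unfold imPart
    refine Prod.ext rfl ?_
    funext i
    show re u * im v i + re v * im u i +
      (∑ r : Fin 7, ∑ s : Fin 7, ((eps r s i : ℤ) : k) * im u r * im v s) = _
    rw [hre_u, hre_v, him_u, him_v]
    ring
  have key : ∀ ℓ : Fin 7,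
      (∑ i : Fin 7, ∑ j : Fin 7, ((eps ℓ i j : ℤ) : k) * b i * a j) = - S ℓ := by
    intro ℓ
    rw [hS, Finset.sum_comm]
    rw [← Finset.sum_neg_distrib]
    refine Finset.sum_congr rfl fun r _ => ?_
    rw [← Finset.sum_neg_distrib]
    refine Finset.sum_congr rfl fun s _ => ?_
    rw [eps_skew ℓ s r]
    push_cast
    ring
  have key2 : ∀ ℓ : Fin 7,
      (∑ r : Fin 7, ∑ s : Fin 7, ((eps r s ℓ : ℤ) : k) * b r * a s) = - S ℓ := by
    intro ℓ
    rw [hS, Finset.sum_comm]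
    rw [← Finset.sum_neg_distrib]
    refine Finset.sum_congr rfl fun r _ => ?_
    rw [← Finset.sum_neg_distrib]
    refine Finset.sum_congr rfl fun s _ => ?_
    rw [eps_swap s r ℓ]
    push_cast
    ring
  have hvu0 : imPart (v * u) = 0 ↔ ∀ ℓ : Fin 7, S ℓ = 0 := by
    rw [hvu]
    constructor
    · intro h ℓ
      have := congrArg (fun w : Oct k => im w ℓ) h
      exact this
    · intro h
      have : (fun i : Fin 7 => S i) = (0 : Fin 7 → k) := funext fun i => h i
      show ((0 : k), fun i => S i) = ((0 : k), (0 : Fin 7 → k))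
      rw [this]
  have huv0 : imPart (u * v) = 0 ↔ ∀ ℓ : Fin 7, S ℓ = 0 := by
    rw [huv]
    constructor
    · intro h ℓ
      have h1 : (∑ r : Fin 7, ∑ s : Fin 7, ((eps r s ℓ : ℤ) : k) * b r * a s) = 0 := by
        have := congrArg (fun w : Oct k => im w ℓ) h
        exact this
      have h2 := key2 ℓ
      rw [h1] at h2
      exact neg_eq_zero.mp h2.symm
    · intro h
      have : (fun i : Fin 7 => ∑ r : Fin 7, ∑ s : Fin 7, ((eps r s i : ℤ) : k) * b r * a s)
          = (0 : Fin 7 → k) := by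
        funext i
        rw [key2 i, h i, neg_zero]
        rfl
      show ((0 : k), _) = ((0 : k), (0 : Fin 7 → k))
      rw [this]
  constructor
  · rw [hvu0]
    constructor
    · intro h ℓ
      have := h ℓ
      rw [key ℓ] at this
      exact neg_eq_zero.mp this
    · intro h ℓ
      rw [key ℓ, h ℓ, neg_zero]
  · rw [hvu0, huv0]
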